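/- Let H be a nonempty compact convex subset of the plane ℝ² (i.e., ℝ × ℝ). Then the slide curve S(H) is a rectifiable simple closed curve; concretely, there exist a real number L > 0 and a Lipschitz map γ : ℝ → (ℝ × ℝ) × (ℝ × ℝ) such that γ(t + L) = γ(t) for every t ∈ ℝ, γ is injective on the half-open interval [0, L), and the range of γ equals S(H). -/

import Mathlib

open Set

/-- The cross product of two planar vectors. -/
noncomputable def cross (u w : ℝ × ℝ) : ℝ := u.1 * w.2 - u.2 * w.1

/-- `(P, u)` is a pointed supporting line of `H`: `P ∈ H`, `u` is a Euclidean unit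
vector, and `H` lies on the left of the directed line through `P` with direction `u`. -/
def IsPointedSupportingLine (H : Set (ℝ × ℝ)) (P u : ℝ × ℝ) : Prop :=
  P ∈ H ∧ u.1 ^ 2 + u.2 ^ 2 = 1 ∧ ∀ Q ∈ H, 0 ≤ cross u (Q - P)

/-- The slide curve of `H`: the set of its pointed supporting lines. -/
def slideCurve (H : Set (ℝ × ℝ)) : Set ((ℝ × ℝ) × (ℝ × ℝ)) :=
  {Pu | IsPointedSupportingLine H Pu.1 Pu.2}

section SlideAux
open Metric

local notation "F2" => WithLp 2 (ℝ × ℝ)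

namespace SlideAux

lemma normsq (x : F2) : ‖x‖^2 = x.fst^2 + x.snd^2 := by
  rw [WithLp.prod_norm_sq_eq_of_L2]; simp [Real.norm_eq_abs, sq_abs]

lemma inner_eq (x y : F2) : (inner ℝ x y : ℝ) = x.fst * y.fst + x.snd * y.snd := by
  rw [WithLp.prod_inner_apply, Real.inner_apply, Real.inner_apply]; rfl

lemma ext2 {x y : F2} (h1 : x.fst = y.fst) (h2 : x.snd = y.snd) : x = y := WithLp.ofLp_injective 2 (Prod.ext h1 h2)

lemma abs_fst_le (x : F2) : |x.fst| ≤ ‖x‖ := by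
  nlinarith [normsq x, norm_nonneg x, sq_abs x.fst, abs_nonneg x.fst, sq_nonneg x.snd]

lemma abs_snd_le (x : F2) : |x.snd| ≤ ‖x‖ := by
  nlinarith [normsq x, norm_nonneg x, sq_abs x.snd, abs_nonneg x.snd, sq_nonneg x.fst]

lemma lipCos : LipschitzWith 1 Real.cos := by
  apply lipschitzWith_of_nnnorm_deriv_le Real.differentiable_cos
  intro x
  rw [← NNReal.coe_le_coe, coe_nnnorm, Real.deriv_cos, Real.norm_eq_abs, NNReal.coe_one, abs_neg]
  exact Real.abs_sin_le_one x

lemma lipSin : LipschitzWith 1 Real.sin := by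
  apply lipschitzWith_of_nnnorm_deriv_le Real.differentiable_sin
  intro x
  rw [← NNReal.coe_le_coe, coe_nnnorm, Real.deriv_sin, Real.norm_eq_abs, NNReal.coe_one]
  exact Real.abs_cos_le_one x

lemma cos_lip (s t : ℝ) : |Real.cos s - Real.cos t| ≤ |s - t| := by
  have := lipCos.dist_le_mul s t; simpa [Real.dist_eq] using this

lemma sin_lip (s t : ℝ) : |Real.sin s - Real.sin t| ≤ |s - t| := by
  have := lipSin.dist_le_mul s t; simpa [Real.dist_eq] using this

lemma angle_inj {s t : ℝ} (hs : s ∈ Ico 0 (2 * Real.pi)) (ht : t ∈ Ico 0 (2 * Real.pi))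
    (hc : Real.cos s = Real.cos t) (hsin : Real.sin s = Real.sin t) : s = t := by
  have he : Complex.exp (s * Complex.I) = Complex.exp (t * Complex.I) := by
    rw [Complex.exp_mul_I, Complex.exp_mul_I, ← Complex.ofReal_cos, ← Complex.ofReal_cos,
      ← Complex.ofReal_sin, ← Complex.ofReal_sin, hc, hsin]
  obtain ⟨k, hk⟩ := Complex.exp_eq_exp_iff_exists_int.1 he
  have hI : (Complex.I : ℂ) ≠ 0 := Complex.I_ne_zero
  have h2 : (s : ℂ) = (t : ℂ) + k * (2 * Real.pi) := by
    have : (s : ℂ) * Complex.I = ((t : ℂ) + k * (2 * Real.pi)) * Complex.I := by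
      rw [hk]; ring
    exact mul_right_cancel₀ hI this
  have h3 : s = t + k * (2 * Real.pi) := by exact_mod_cast h2
  have hπ := Real.pi_pos
  have hk0 : k = 0 := by
    rcases lt_trichotomy k 0 with h | h | h
    · exfalso
      have : (k : ℝ) ≤ -1 := by exact_mod_cast Int.le_of_lt_add_one (by omega : k < -1 + 1)
      nlinarith [hs.1, hs.2, ht.1, ht.2]
    · exact h
    · exfalso
      have : (1 : ℝ) ≤ (k : ℝ) := by exact_mod_cast h
      nlinarith [hs.1, hs.2, ht.1, ht.2]
  rw [hk0] at h3; simpa using h3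

/-- Characterization of the metric projection onto a convex set. -/
lemma dist_eq_infDist_iff {H' : Set F2} (hconv : Convex ℝ H') {z p : F2} (hp : p ∈ H') :
    dist z p = infDist z H' ↔ ∀ q ∈ H', (inner ℝ (z - p) (q - p) : ℝ) ≤ 0 := by
  have hiInf : infDist z H' = ⨅ w : H', ‖z - w‖ := by
    rw [infDist_eq_iInf]; exact iInf_congr fun w => dist_eq_norm _ _
  rw [dist_eq_norm, hiInf]
  exact norm_eq_iInf_iff_real_inner_le_zero hconv hp

lemma proj_unique {H' : Set F2} (hconv : Convex ℝ H') {z p q : F2}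
    (hp : p ∈ H') (hq : q ∈ H') (hdp : dist z p = infDist z H')
    (hdq : dist z q = infDist z H') : p = q := by
  have h1 := (dist_eq_infDist_iff hconv hp).1 hdp q hq
  have h2 := (dist_eq_infDist_iff hconv hq).1 hdq p hp
  rw [inner_eq] at h1 h2
  have e1 : (z - p).fst = z.fst - p.fst := rfl
  have e2 : (z - p).snd = z.snd - p.snd := rfl
  have e3 : (z - q).fst = z.fst - q.fst := rfl
  have e4 : (z - q).snd = z.snd - q.snd := rfl
  have e5 : (q - p).fst = q.fst - p.fst := rfl
  have e6 : (q - p).snd = q.snd - p.snd := rfl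
  have e7 : (p - q).fst = p.fst - q.fst := rfl
  have e8 : (p - q).snd = p.snd - q.snd := rfl
  rw [e1, e2, e5, e6] at h1
  rw [e3, e4, e7, e8] at h2
  exact ext2 (by nlinarith [sq_nonneg (p.fst - q.fst), sq_nonneg (p.snd - q.snd)])
    (by nlinarith [sq_nonneg (p.fst - q.fst), sq_nonneg (p.snd - q.snd)])

/-- The metric projection is nonexpansive. -/
lemma proj_nonexp {H' : Set F2} (hconv : Convex ℝ H') {x y a b : F2}
    (ha : a ∈ H') (hb : b ∈ H') (hda : dist x a = infDist x H')
    (hdb : dist y b = infDist y H') : dist a b ≤ dist x y := by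
  have h1 := (dist_eq_infDist_iff hconv ha).1 hda b hb
  have h2 := (dist_eq_infDist_iff hconv hb).1 hdb a ha
  rw [inner_eq] at h1 h2
  have e1 : (x - a).fst = x.fst - a.fst := rfl
  have e2 : (x - a).snd = x.snd - a.snd := rfl
  have e3 : (y - b).fst = y.fst - b.fst := rfl
  have e4 : (y - b).snd = y.snd - b.snd := rfl
  have e5 : (b - a).fst = b.fst - a.fst := rfl
  have e6 : (b - a).snd = b.snd - a.snd := rfl
  have e7 : (a - b).fst = a.fst - b.fst := rfl
  have e8 : (a - b).snd = a.snd - b.snd := rfl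
  rw [e1, e2, e5, e6] at h1
  rw [e3, e4, e7, e8] at h2
  rw [dist_eq_norm, dist_eq_norm]
  have hsq : ‖a - b‖^2 ≤ ‖x - y‖^2 := by
    rw [normsq, normsq, e7, e8]
    have e9 : (x - y).fst = x.fst - y.fst := rfl
    have e10 : (x - y).snd = x.snd - y.snd := rfl
    rw [e9, e10]
    nlinarith [sq_nonneg ((x.fst - y.fst) * (a.snd - b.snd) - (x.snd - y.snd) * (a.fst - b.fst)),
      sq_nonneg (a.fst - b.fst), sq_nonneg (a.snd - b.snd),
      sq_nonneg ((x.fst - y.fst) - (a.fst - b.fst)), sq_nonneg ((x.snd - y.snd) - (a.snd - b.snd))]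
  nlinarith [norm_nonneg (a - b), norm_nonneg (x - y)]

/-- The unit circle parametrization in `F2`. -/
noncomputable def sph (t : ℝ) : F2 :=
  (WithLp.equiv 2 (ℝ × ℝ)).symm (Real.cos t, Real.sin t)

lemma sph_fst (t : ℝ) : (sph t).fst = Real.cos t := rfl
lemma sph_snd (t : ℝ) : (sph t).snd = Real.sin t := rfl

lemma norm_sph (t : ℝ) : ‖sph t‖ = 1 := by
  have h := normsq (sph t)
  rw [sph_fst, sph_snd] at h
  nlinarith [norm_nonneg (sph t), Real.sin_sq_add_cos_sq t]

lemma sph_lip (s t : ℝ) : ‖sph s - sph t‖ ≤ 2 * |s - t| := by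
  have h := normsq (sph s - sph t)
  have e1 : (sph s - sph t).fst = Real.cos s - Real.cos t := rfl
  have e2 : (sph s - sph t).snd = Real.sin s - Real.sin t := rfl
  rw [e1, e2] at h
  nlinarith [cos_lip s t, sin_lip s t, abs_nonneg (s - t), norm_nonneg (sph s - sph t),
    sq_abs (Real.cos s - Real.cos t), sq_abs (Real.sin s - Real.sin t),
    abs_nonneg (Real.cos s - Real.cos t), abs_nonneg (Real.sin s - Real.sin t)]

lemma sph_periodic (t : ℝ) : sph (t + 2 * Real.pi) = sph t := by
  unfold sph
  rw [Real.cos_add_two_pi, Real.sin_add_two_pi]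

end SlideAux
set_option maxHeartbeats 2000000 in
open SlideAux Metric Pointwise in
/-- For a nonempty compact convex `H ⊆ ℝ²`, the slide curve `S(H)` is a rectifiable
simple closed curve: there are `L > 0` and a Lipschitz map `γ : ℝ → ℝ² × ℝ²`,
periodic with period `L`, injective on `[0, L)`, whose range is `S(H)`. -/
theorem slideCurve_is_rectifiable_simple_closed_curve
    (H : Set (ℝ × ℝ)) (hne : H.Nonempty) (hcomp : IsCompact H) (hconv : Convex ℝ H) :
    ∃ L : ℝ, 0 < L ∧ ∃ (K : NNReal) (γ : ℝ → (ℝ × ℝ) × (ℝ × ℝ)),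
      LipschitzWith K γ ∧ (∀ t : ℝ, γ (t + L) = γ t) ∧
      Set.InjOn γ (Set.Ico 0 L) ∧ Set.range γ = slideCurve H := by
  classical
  set e := WithLp.equiv 2 (ℝ × ℝ) with he
  set H' : Set F2 := e ⁻¹' H with hH'
  have hne' : H'.Nonempty := ⟨e.symm hne.choose, by
    simp only [hH', Set.mem_preimage, Equiv.apply_symm_apply]; exact hne.choose_spec⟩
  have hH'img : H' = e.symm '' H := by
    rw [hH', Equiv.image_eq_preimage_symm, Equiv.symm_symm]
  have hcomp' : IsCompact H' := by
    rw [hH'img]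
    exact hcomp.image (WithLp.prod_continuous_toLp 2 ℝ ℝ)
  have hconv' : Convex ℝ H' := by
    intro x hx y hy a b ha hb hab
    have hxy : e (a • x + b • y) = a • e x + b • e y := rfl
    show e (a • x + b • y) ∈ H
    rw [hxy]
    exact hconv hx hy ha hb hab
  -- the metric projection onto H'
  have proj_ex : ∀ z : F2, ∃ p, p ∈ H' ∧ dist z p = infDist z H' := by
    intro z
    obtain ⟨p, hp, hd⟩ := hcomp'.exists_infDist_eq_dist hne' z
    exact ⟨p, hp, hd.symm⟩
  choose proj projmem projdist using proj_ex
  have projchar : ∀ z q, q ∈ H' → (inner ℝ (z - proj z) (q - proj z) : ℝ) ≤ 0 :=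
    fun z q hq => (dist_eq_infDist_iff hconv' (projmem z)).1 (projdist z) q hq
  -- the outer body K = H' + unit ball, and its translate K'
  -- the outer body K = H' + unit ball, and its translate K'
  set Kset : Set F2 := H' + closedBall (0:F2) 1 with hKset
  have hKmem : ∀ z : F2, z ∈ Kset ↔ infDist z H' ≤ 1 := by
    intro z
    simp only [hKset]
    constructor
    · intro hz
      obtain ⟨h, hh, b, hb, rfl⟩ := Set.mem_add.1 hz
      calc infDist (h + b) H' ≤ dist (h + b) h := infDist_le_dist_of_mem hh
        _ = ‖b‖ := by rw [dist_eq_norm]; congr 1; abel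
        _ ≤ 1 := by simpa [mem_closedBall, dist_zero_right] using hb
    · intro h
      have hzsum : proj z + (z - proj z) = z := by abel
      refine Set.mem_add.2 ⟨proj z, projmem z, z - proj z, ?_, hzsum⟩
      rw [mem_closedBall, dist_zero_right]
      have hz : ‖z - proj z‖ = dist z (proj z) := (dist_eq_norm _ _).symm
      rw [hz, projdist z]
      exact h
  have hKcomp : IsCompact Kset := by
    rw [hKset]; exact hcomp'.add (isCompact_closedBall (0:F2) 1)
  have hconvK : Convex ℝ Kset := by
    rw [hKset]; exact hconv'.add (convex_closedBall _ _)
  obtain ⟨c, hc⟩ := hne'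
  set K' : Set F2 := (fun x => c + x) ⁻¹' Kset with hK'
  have hK'mem : ∀ x : F2, x ∈ K' ↔ infDist (c + x) H' ≤ 1 := by
    intro x
    rw [hK', Set.mem_preimage]
    exact hKmem _
  have hball : closedBall (0:F2) 1 ⊆ K' := by
    intro x hx
    rw [hK'mem]
    calc infDist (c + x) H' ≤ dist (c + x) c := infDist_le_dist_of_mem hc
      _ = ‖x‖ := by rw [dist_eq_norm]; congr 1; abel
      _ ≤ 1 := by simpa [mem_closedBall, dist_zero_right] using hx
  have habs : Absorbent ℝ K' := absorbent_nhds_zero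
    (Filter.mem_of_superset (closedBall_mem_nhds 0 one_pos) hball)
  have hK'conv : Convex ℝ K' := by
    intro x hx y hy a b ha hb hab
    have hx' : c + x ∈ Kset := (hKmem _).2 ((hK'mem x).1 hx)
    have hy' : c + y ∈ Kset := (hKmem _).2 ((hK'mem y).1 hy)
    have key : c + (a • x + b • y) = a • (c + x) + b • (c + y) := by
      rw [smul_add, smul_add]
      have hcc : a • c + b • c = c := by rw [← add_smul, hab, one_smul]
      rw [show a • c + a • x + (b • c + b • y) = (a • c + b • c) + (a • x + b • y) by abel, hcc]
    have hmem : c + (a • x + b • y) ∈ Kset := by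
      rw [key]; exact hconvK hx' hy' ha hb hab
    exact (hK'mem _).2 ((hKmem _).1 hmem)
  obtain ⟨R0, hR0⟩ := hKcomp.isBounded.subset_closedBall 0
  set M : ℝ := max 1 (R0 + ‖c‖) with hM
  have hM1 : (1:ℝ) ≤ M := le_max_left _ _
  have hM0 : (0:ℝ) < M := lt_of_lt_of_le one_pos hM1
  have hK'bound : ∀ x ∈ K', ‖x‖ ≤ M := by
    intro x hx
    have h1 : c + x ∈ closedBall (0:F2) R0 := hR0 ((hKmem _).2 ((hK'mem x).1 hx))
    rw [mem_closedBall, dist_zero_right] at h1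
    have h2 : ‖x‖ ≤ R0 + ‖c‖ := by
      calc ‖x‖ = ‖(c + x) - c‖ := by congr 1; abel
        _ ≤ ‖c + x‖ + ‖c‖ := norm_sub_le _ _
        _ ≤ R0 + ‖c‖ := by linarith
    exact h2.trans (le_max_right _ _)
  have hK'sub : K' ⊆ closedBall 0 M := fun x hx => by
    rw [mem_closedBall, dist_zero_right]; exact hK'bound x hx
  -- the gauge of K'
  set g : F2 → ℝ := gauge K' with hg
  have habs1 : Absorbent ℝ (closedBall (0:F2) 1) :=
    absorbent_nhds_zero (closedBall_mem_nhds 0 one_pos)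
  have g_le : ∀ x, g x ≤ ‖x‖ := by
    intro x
    have h := gauge_mono habs1 hball x
    rwa [gauge_closedBall zero_le_one, div_one] at h
  have g_ge : ∀ x, ‖x‖ / M ≤ g x := by
    intro x
    have h := gauge_mono habs hK'sub x
    rwa [gauge_closedBall hM0.le] at h
  have g_sub : ∀ x y, g x ≤ g y + ‖x - y‖ := by
    intro x y
    calc g x = gauge K' (y + (x - y)) := by rw [add_sub_cancel]
      _ ≤ g y + g (x - y) := gauge_add_le hK'conv habs _ _
      _ ≤ g y + ‖x - y‖ := by linarith [g_le (x - y)]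
  -- gauge = 1 iff on the level set {infDist = 1}
  have g_to_dist : ∀ x : F2, g x = 1 → infDist (c + x) H' = 1 := by
    intro x hx1
    have hle : infDist (c + x) H' ≤ 1 := by
      refine le_of_forall_pos_le_add ?_
      intro ε hε
      have hgx : g x < 1 + ε / M := by
        rw [hx1]; linarith [div_pos hε hM0]
      obtain ⟨a, ha0, hat, hmem⟩ := exists_lt_of_gauge_lt habs hgx
      obtain ⟨y, hy, rfl⟩ := Set.mem_smul_set.1 hmem
      have ha1 : 1 ≤ a := by
        have h2 := gauge_le_of_mem ha0.le hmem
        simp only [hg] at hx1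
        linarith
      have hyM : ‖y‖ ≤ M := hK'bound y hy
      have hdy : infDist (c + y) H' ≤ 1 := (hK'mem y).1 hy
      calc infDist (c + a • y) H' ≤ infDist (c + y) H' + dist (c + a • y) (c + y) :=
            infDist_le_infDist_add_dist
        _ = infDist (c + y) H' + ‖(a - 1) • y‖ := by
            rw [dist_eq_norm]
            congr 2
            rw [sub_smul, one_smul]
            abel
        _ ≤ 1 + (a - 1) * ‖y‖ := by
            rw [norm_smul, Real.norm_eq_abs, abs_of_nonneg (by linarith : (0:ℝ) ≤ a - 1)]
            linarith
        _ ≤ 1 + ε := by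
            have h1 : (a - 1) * ‖y‖ ≤ (a - 1) * M :=
              mul_le_mul_of_nonneg_left hyM (by linarith)
            have h2 : (a - 1) * M ≤ (ε / M) * M := by
              apply mul_le_mul_of_nonneg_right _ hM0.le
              linarith
            rw [div_mul_cancel₀ _ (ne_of_gt hM0)] at h2
            linarith
    have hge : 1 ≤ infDist (c + x) H' := by
      by_contra hlt
      push_neg at hlt
      set d := infDist (c + x) H' with hd
      have hint : x ∈ interior K' := by
        rw [mem_interior]
        refine ⟨ball x (1 - d), ?_, isOpen_ball, mem_ball_self (by linarith)⟩
        intro y hy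
        rw [mem_ball] at hy
        rw [hK'mem]
        calc infDist (c + y) H' ≤ infDist (c + x) H' + dist (c + y) (c + x) :=
              infDist_le_infDist_add_dist
          _ = d + dist y x := by rw [dist_add_left]
          _ ≤ 1 := by linarith
      have h2 := interior_subset_gauge_lt_one K' hint
      rw [Set.mem_setOf_eq] at h2
      simp only [hg] at hx1
      linarith
    linarith
  have dist_to_g : ∀ x : F2, infDist (c + x) H' = 1 → g x = 1 := by
    intro x hx1
    have hle : g x ≤ 1 := gauge_le_one_of_mem ((hK'mem x).2 hx1.le)
    have hge : 1 ≤ g x := by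
      by_contra h
      push_neg at h
      rw [hg] at h
      obtain ⟨a, ha0, ha1, hmem⟩ := exists_lt_of_gauge_lt habs h
      obtain ⟨y, hy, rfl⟩ := Set.mem_smul_set.1 hmem
      obtain ⟨h₀, hh₀, b₀, hb₀, hsum⟩ := Set.mem_add.1
        (show c + y ∈ H' + closedBall (0:F2) 1 from by
          rw [← hKset]; exact (hKmem _).2 ((hK'mem y).1 hy))
      have hyv : y = h₀ + b₀ - c := by
        rw [eq_sub_iff_add_eq, add_comm y c, hsum]
      have hq : (1 - a) • c + a • h₀ ∈ H' :=
        hconv' hc hh₀ (by linarith) ha0.le (by ring)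
      have hbnorm : ‖b₀‖ ≤ 1 := by
        rw [mem_closedBall, dist_zero_right] at hb₀; exact hb₀
      have hcalc : (c + a • y) - ((1 - a) • c + a • h₀) = a • b₀ := by
        rw [hyv, smul_sub, smul_add, sub_smul, one_smul]
        abel
      have : infDist (c + a • y) H' ≤ a := by
        calc infDist (c + a • y) H' ≤ dist (c + a • y) ((1 - a) • c + a • h₀) :=
              infDist_le_dist_of_mem hq
          _ = ‖a • b₀‖ := by rw [dist_eq_norm, hcalc]
          _ = a * ‖b₀‖ := by rw [norm_smul, Real.norm_eq_abs, abs_of_pos ha0]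
          _ ≤ a := by nlinarith
      rw [hx1] at this
      linarith
    linarith
  -- the radial parametrization of the level set
  have gs_ub : ∀ t, g (sph t) ≤ 1 := fun t => (g_le (sph t)).trans_eq (norm_sph t)
  have gs_lb : ∀ t, 1 / M ≤ g (sph t) := fun t => by
    have := g_ge (sph t); rwa [norm_sph t] at this
  have gs_pos : ∀ t, 0 < g (sph t) := fun t =>
    lt_of_lt_of_le (div_pos one_pos hM0) (gs_lb t)
  set r : ℝ → ℝ := fun t => (g (sph t))⁻¹ with hr
  have hr_pos : ∀ t, 0 < r t := fun t => inv_pos.2 (gs_pos t)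
  have hr_ge1 : ∀ t, 1 ≤ r t := fun t =>
    (one_le_inv₀ (gs_pos t)).2 (gs_ub t)
  have hr_leM : ∀ t, r t ≤ M := fun t => by
    have h2 := gs_pos t
    show (g (sph t))⁻¹ ≤ M
    rw [inv_le_comm₀ h2 hM0]
    rw [inv_eq_one_div]
    exact gs_lb t
  -- Lipschitz bound for r
  have hgs_lip : ∀ s t, |g (sph s) - g (sph t)| ≤ 2 * |s - t| := by
    intro s t
    rw [abs_sub_le_iff]
    constructor
    · linarith [g_sub (sph s) (sph t), sph_lip s t]
    · have h := g_sub (sph t) (sph s)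
      have h2 : ‖sph t - sph s‖ ≤ 2 * |t - s| := sph_lip t s
      rw [abs_sub_comm]
      linarith
  have hr_lip : ∀ s t, |r s - r t| ≤ 2 * M^2 * |s - t| := by
    intro s t
    have hgs := gs_pos s
    have hgt := gs_pos t
    have hid : r s - r t = (g (sph t) - g (sph s)) * (r s * r t) := by
      show (g (sph s))⁻¹ - (g (sph t))⁻¹ = (g (sph t) - g (sph s)) * ((g (sph s))⁻¹ * (g (sph t))⁻¹)
      field_simp
    rw [hid, abs_mul]
    have h1 : |g (sph t) - g (sph s)| ≤ 2 * |s - t| := by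
      rw [abs_sub_comm]; exact hgs_lip s t
    have h2 : |r s * r t| ≤ M^2 := by
      rw [abs_mul, abs_of_pos (hr_pos s), abs_of_pos (hr_pos t), sq]
      exact mul_le_mul (hr_leM s) (hr_leM t) (hr_pos t).le (by linarith)
    calc |g (sph t) - g (sph s)| * |r s * r t| ≤ (2 * |s - t|) * M^2 := by
          apply mul_le_mul h1 h2 (abs_nonneg _) (by positivity)
      _ = 2 * M^2 * |s - t| := by ring
  -- the boundary parametrization ρ and its properties
  set ρ : ℝ → F2 := fun t => c + r t • sph t with hρ
  have hρ_lip : ∀ s t, ‖ρ s - ρ t‖ ≤ (2 * M^2 + 2 * M) * |s - t| := by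
    intro s t
    have hid : ρ s - ρ t = (r s - r t) • sph s + r t • (sph s - sph t) := by
      simp only [hρ]
      rw [sub_smul, smul_sub]
      abel
    rw [hid]
    calc ‖(r s - r t) • sph s + r t • (sph s - sph t)‖
        ≤ ‖(r s - r t) • sph s‖ + ‖r t • (sph s - sph t)‖ := norm_add_le _ _
      _ = |r s - r t| * ‖sph s‖ + |r t| * ‖sph s - sph t‖ := by
          rw [norm_smul, norm_smul, Real.norm_eq_abs, Real.norm_eq_abs]
      _ ≤ (2 * M^2 * |s - t|) * 1 + M * (2 * |s - t|) := by
          apply add_le_add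
          · rw [norm_sph]
            simpa using hr_lip s t
          · apply mul_le_mul _ (sph_lip s t) (norm_nonneg _) hM0.le
            rw [abs_of_pos (hr_pos t)]
            exact hr_leM t
      _ = (2 * M^2 + 2 * M) * |s - t| := by ring
  have hρ_per : ∀ t, ρ (t + 2 * Real.pi) = ρ t := by
    intro t
    simp only [hρ, hr, sph_periodic]
  have hgρ : ∀ t, g (r t • sph t) = 1 := by
    intro t
    have h0 : r t • sph t = r t • sph t := rfl
    show gauge K' (r t • sph t) = 1
    rw [gauge_smul_of_nonneg (hr_pos t).le]
    show r t • gauge K' (sph t) = 1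
    rw [smul_eq_mul]
    show (g (sph t))⁻¹ * g (sph t) = 1
    exact inv_mul_cancel₀ (ne_of_gt (gs_pos t))
  have hρdist : ∀ t, infDist (ρ t) H' = 1 := fun t => g_to_dist _ (hgρ t)
  have hn_norm : ∀ t, ‖ρ t - proj (ρ t)‖ = 1 := by
    intro t
    rw [← dist_eq_norm, projdist, hρdist]
  -- the curve γ
  set nvec : ℝ → F2 := fun t => ρ t - proj (ρ t) with hnvec
  set γ : ℝ → (ℝ × ℝ) × (ℝ × ℝ) := fun t =>
    (((proj (ρ t)).fst, (proj (ρ t)).snd), (-(nvec t).snd, (nvec t).fst)) with hγ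
  have proj_lipd : ∀ x y : F2, dist (proj x) (proj y) ≤ dist x y := fun x y =>
    proj_nonexp hconv' (projmem x) (projmem y) (projdist x) (projdist y)
  set C : ℝ := 2 * (2 * M ^ 2 + 2 * M) with hC
  have hC0 : 0 ≤ C := by positivity
  have hproj_dist : ∀ s t : ℝ, ‖proj (ρ s) - proj (ρ t)‖ ≤ (2 * M ^ 2 + 2 * M) * |s - t| := by
    intro s t
    rw [← dist_eq_norm]
    refine (proj_lipd _ _).trans ?_
    rw [dist_eq_norm]
    exact hρ_lip s t
  have hnvec_dist : ∀ s t : ℝ, ‖nvec s - nvec t‖ ≤ C * |s - t| := by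
    intro s t
    have hid : nvec s - nvec t = (ρ s - ρ t) - (proj (ρ s) - proj (ρ t)) := by
      simp only [hnvec]; abel
    rw [hid, hC]
    calc ‖(ρ s - ρ t) - (proj (ρ s) - proj (ρ t))‖
        ≤ ‖ρ s - ρ t‖ + ‖proj (ρ s) - proj (ρ t)‖ := norm_sub_le _ _
      _ ≤ (2 * M ^ 2 + 2 * M) * |s - t| + (2 * M ^ 2 + 2 * M) * |s - t| :=
          add_le_add (hρ_lip s t) (hproj_dist s t)
      _ = 2 * (2 * M ^ 2 + 2 * M) * |s - t| := by ring
  refine ⟨2 * Real.pi, Real.two_pi_pos, C.toNNReal, γ, ?_, ?_, ?_, ?_⟩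
  · -- Lipschitz
    apply LipschitzWith.of_dist_le_mul
    intro s t
    rw [Real.coe_toNNReal _ hC0, Real.dist_eq]
    have hmain : dist (γ s) (γ t) ≤ C * |s - t| := by
      rw [Prod.dist_eq]
      apply max_le
      · rw [Prod.dist_eq]
        apply max_le
        · have h1 : |(proj (ρ s) - proj (ρ t)).fst| ≤ ‖proj (ρ s) - proj (ρ t)‖ :=
            abs_fst_le _
          have h2 := hproj_dist s t
          have h3 : dist ((γ s).fst.fst) ((γ t).fst.fst) = |(proj (ρ s) - proj (ρ t)).fst| := by
            rw [Real.dist_eq]; rfl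
          rw [h3, hC]
          nlinarith [abs_nonneg (s - t), sq_nonneg M, hM0]
        · have h1 : |(proj (ρ s) - proj (ρ t)).snd| ≤ ‖proj (ρ s) - proj (ρ t)‖ :=
            abs_snd_le _
          have h2 := hproj_dist s t
          have h3 : dist ((γ s).fst.snd) ((γ t).fst.snd) = |(proj (ρ s) - proj (ρ t)).snd| := by
            rw [Real.dist_eq]; rfl
          rw [h3, hC]
          nlinarith [abs_nonneg (s - t), sq_nonneg M, hM0]
      · rw [Prod.dist_eq]
        apply max_le
        · have h1 : |(nvec s - nvec t).snd| ≤ ‖nvec s - nvec t‖ := abs_snd_le _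
          have h2 := hnvec_dist s t
          have h3 : dist ((γ s).snd.fst) ((γ t).snd.fst) = |(nvec s - nvec t).snd| := by
            rw [Real.dist_eq]
            have : (γ s).snd.fst - (γ t).snd.fst = -((nvec s - nvec t).snd) := by
              show -(nvec s).snd - -(nvec t).snd = -((nvec s).snd - (nvec t).snd)
              ring
            rw [this, abs_neg]
          rw [h3]
          linarith
        · have h1 : |(nvec s - nvec t).fst| ≤ ‖nvec s - nvec t‖ := abs_fst_le _
          have h2 := hnvec_dist s t
          have h3 : dist ((γ s).snd.snd) ((γ t).snd.snd) = |(nvec s - nvec t).fst| := by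
            rw [Real.dist_eq]; rfl
          rw [h3]
          linarith
    exact hmain
  · -- periodicity
    intro t
    have h := hρ_per t
    simp only [hγ, hnvec, h]
  · -- injectivity
    intro s hs t ht hst
    have h1 : (proj (ρ s)).fst = (proj (ρ t)).fst := congrArg (fun q => q.fst.fst) hst
    have h2 : (proj (ρ s)).snd = (proj (ρ t)).snd := congrArg (fun q => q.fst.snd) hst
    have h3 : (nvec s).snd = (nvec t).snd := by
      have := congrArg (fun q => q.snd.fst) hst
      exact neg_injective this
    have h4 : (nvec s).fst = (nvec t).fst := congrArg (fun q => q.snd.snd) hst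
    have hproj_eq : proj (ρ s) = proj (ρ t) := ext2 h1 h2
    have hnvec_eq : nvec s = nvec t := ext2 h4 h3
    have e1 : ∀ tt : ℝ, proj (ρ tt) + nvec tt = ρ tt := by
      intro tt; simp only [hnvec]; abel
    have hρ_eq : ρ s = ρ t := by
      rw [← e1 s, ← e1 t, hproj_eq, hnvec_eq]
    have hsm : r s • sph s = r t • sph t := by
      have h5 : c + r s • sph s = c + r t • sph t := hρ_eq
      exact add_left_cancel h5
    have hrn : r s = r t := by
      have hns : ‖r s • sph s‖ = r s := by
        rw [norm_smul, Real.norm_eq_abs, abs_of_pos (hr_pos s), norm_sph, mul_one]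
      have hnt : ‖r t • sph t‖ = r t := by
        rw [norm_smul, Real.norm_eq_abs, abs_of_pos (hr_pos t), norm_sph, mul_one]
      rw [← hns, ← hnt, hsm]
    have hsph : sph s = sph t := by
      rw [← hrn] at hsm
      exact smul_right_injective _ (hr_pos s).ne' hsm
    have hcos : Real.cos s = Real.cos t := congrArg (fun x : F2 => x.fst) hsph
    have hsin : Real.sin s = Real.sin t := congrArg (fun x : F2 => x.snd) hsph
    exact angle_inj hs ht hcos hsin
  · -- range
    ext Pu
    constructor
    · rintro ⟨t, ht⟩
      rw [← ht]
      have hγt : γ t = (((proj (ρ t)).fst, (proj (ρ t)).snd), (-(nvec t).snd, (nvec t).fst)) := by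
        simp only [hγ]
      rw [hγt]
      have hnn : ‖nvec t‖ = 1 := hn_norm t
      show IsPointedSupportingLine H ((proj (ρ t)).fst, (proj (ρ t)).snd) (-(nvec t).snd, (nvec t).fst)
      refine ⟨?_, ?_, ?_⟩
      · have hm := projmem (ρ t)
        rw [hH', Set.mem_preimage] at hm
        exact hm
      · show (-(nvec t).snd) ^ 2 + ((nvec t).fst) ^ 2 = 1
        have h := normsq (nvec t)
        rw [hnn] at h
        nlinarith
      · intro Q hQ
        have hq' : e.symm Q ∈ H' := by
          rw [hH', Set.mem_preimage, Equiv.apply_symm_apply]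
          exact hQ
        have hch := projchar (ρ t) (e.symm Q) hq'
        rw [inner_eq] at hch
        have hch' : (nvec t).fst * (Q.fst - (proj (ρ t)).fst) +
            (nvec t).snd * (Q.snd - (proj (ρ t)).snd) ≤ 0 := hch
        show 0 ≤ (-(nvec t).snd) * (Q.snd - (proj (ρ t)).snd) -
          ((nvec t).fst) * (Q.fst - (proj (ρ t)).fst)
        linarith
    · intro h
      obtain ⟨hP, hu, hcr⟩ := h
      set P : ℝ × ℝ := Pu.1 with hPdef
      set u : ℝ × ℝ := Pu.2 with hudef
      set P' : F2 := e.symm P with hP'def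
      have hP'mem : P' ∈ H' := by
        rw [hH', Set.mem_preimage, hP'def, Equiv.apply_symm_apply]
        exact hP
      set nv : F2 := e.symm (u.2, -u.1) with hnvdef
      set z : F2 := P' + nv with hzdef
      have hnv1 : nv.fst = u.snd := rfl
      have hnv2 : nv.snd = -u.fst := rfl
      have hnvnorm : ‖nv‖ = 1 := by
        have h := normsq nv
        rw [hnv1, hnv2] at h
        nlinarith [norm_nonneg nv, hu]
      have hdzP : dist z P' = 1 := by
        rw [dist_eq_norm]
        have hzz : z - P' = nv := by rw [hzdef]; abel
        rw [hzz, hnvnorm]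
      have hinf : infDist z H' = 1 := by
        apply le_antisymm
        · rw [← hdzP]; exact infDist_le_dist_of_mem hP'mem
        · by_contra hlt
          push_neg at hlt
          obtain ⟨q, hq, hdq⟩ := (infDist_lt_iff ⟨c, hc⟩).1 hlt
          have hqH : e q ∈ H := hq
          have hcrq := hcr (e q) hqH
          have hcrq' : 0 ≤ u.fst * (q.snd - P.snd) - u.snd * (q.fst - P.fst) := hcrq
          have hd2 : (1:ℝ) ≤ dist z q := by
            rw [dist_eq_norm]
            have h := normsq (z - q)
            have hz1 : (z - q).fst = P.fst + u.snd - q.fst := rfl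
            have hz2 : (z - q).snd = P.snd - u.fst - q.snd := rfl
            rw [hz1, hz2] at h
            nlinarith [norm_nonneg (z - q), hu, sq_nonneg (q.fst - P.fst), sq_nonneg (q.snd - P.snd)]
          linarith
      have hprojz : proj z = P' :=
        proj_unique hconv' (projmem z) hP'mem (projdist z) (by rw [hdzP, hinf])
      set v : F2 := z - c with hvdef
      have hcz : c + v = z := by rw [hvdef]; abel
      have hgv : g v = 1 := dist_to_g v (by rw [hcz]; exact hinf)
      have hvne : v ≠ 0 := by
        intro h0
        have hz0 : z = c := by rw [← hcz, h0, add_zero]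
        rw [hz0, infDist_zero_of_mem hc] at hinf
        exact zero_ne_one hinf
      have hvnorm_pos : 0 < ‖v‖ := norm_pos_iff.2 hvne
      set ζ : ℂ := Complex.mk v.fst v.snd with hζdef
      have hζre : ζ.re = v.fst := rfl
      have hζim : ζ.im = v.snd := rfl
      have hζne : ζ ≠ 0 := by
        intro h0
        apply hvne
        have hre : ζ.re = 0 := by rw [h0]; rfl
        have him : ζ.im = 0 := by rw [h0]; rfl
        exact ext2 hre him
      have habsζ : ‖ζ‖ = ‖v‖ := by
        have h1 : ‖ζ‖ ^ 2 = ‖v‖ ^ 2 := by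
          rw [Complex.sq_norm, Complex.normSq_apply, normsq, hζre, hζim]; ring
        calc ‖ζ‖ = Real.sqrt (‖ζ‖ ^ 2) :=
              (Real.sqrt_sq (norm_nonneg ζ)).symm
          _ = Real.sqrt (‖v‖ ^ 2) := by rw [h1]
          _ = ‖v‖ := Real.sqrt_sq (norm_nonneg v)
      set t₀ : ℝ := Complex.arg ζ with ht₀def
      have hcos : Real.cos t₀ = v.fst / ‖v‖ := by
        rw [ht₀def, Complex.cos_arg hζne, hζre, habsζ]
      have hsin : Real.sin t₀ = v.snd / ‖v‖ := by
        rw [ht₀def, Complex.sin_arg, hζim, habsζ]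
      have hsph : sph t₀ = ‖v‖⁻¹ • v := by
        apply ext2
        · rw [sph_fst, hcos]
          show v.fst / ‖v‖ = ‖v‖⁻¹ * v.fst
          rw [div_eq_inv_mul]
        · rw [sph_snd, hsin]
          show v.snd / ‖v‖ = ‖v‖⁻¹ * v.snd
          rw [div_eq_inv_mul]
      have hgsph : g (sph t₀) = ‖v‖⁻¹ := by
        rw [hsph]
        show gauge K' (‖v‖⁻¹ • v) = ‖v‖⁻¹
        rw [gauge_smul_of_nonneg (inv_nonneg.2 (norm_nonneg v)), smul_eq_mul]
        have hgv' : gauge K' v = 1 := hgv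
        rw [hgv', mul_one]
      have hrt : r t₀ = ‖v‖ := by
        show (g (sph t₀))⁻¹ = ‖v‖
        rw [hgsph, inv_inv]
      have hρt : ρ t₀ = z := by
        show c + r t₀ • sph t₀ = z
        rw [hrt, hsph, smul_smul, mul_inv_cancel₀ hvnorm_pos.ne', one_smul, hcz]
      refine ⟨t₀, ?_⟩
      have hnvt : nvec t₀ = nv := by
        show ρ t₀ - proj (ρ t₀) = nv
        rw [hρt, hprojz, hzdef]
        abel
      have hγt : γ t₀ = (((proj (ρ t₀)).fst, (proj (ρ t₀)).snd), (-(nvec t₀).snd, (nvec t₀).fst)) := by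
        simp only [hγ]
      rw [hγt, hρt, hprojz, hnvt]
      have hfst : (P'.fst, P'.snd) = P := rfl
      have hsnd : (-nv.snd, nv.fst) = u := by
        rw [hnv1, hnv2, neg_neg]
      rw [hfst, hsnd]
end SlideAux
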